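/- Let g(z_1,…,z_k) = Σ_{|λ|=d} a_λ z^λ be a nonzero homogeneous polynomial of degree d, fix λ_0 with a_{λ0} ≠ 0, and set b_λ = (a_λ c_{λ0})/(c_λ a_{λ0}) where c_λ = d!/(λ_1!···λ_k!) is the multinomial coefficient. Then in the quotient algebra A = K[x_1,…,x_k]/(x^λ : |λ| = d+1; x^λ − b_λ x^{λ0} : |λ| = d, λ ≠ λ_0), the element (z_1 x_1 + … + z_k x_k)^d equals (c_{λ0}/a_{λ0}) g(z_1,…,z_k) · x^{λ0}. -/

import Mathlib

open MvPolynomial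

/-- Let `g = Σ_{|λ|=d} a_λ z^λ` be a nonzero homogeneous polynomial of degree `d`, fix `λ₀`
with `a_{λ₀} ≠ 0`, and set `b_λ = (a_λ c_{λ₀})/(c_λ a_{λ₀})` with `c_λ` the multinomial
coefficient. Then in the quotient algebra
`A = K[x_1,…,x_k]/(x^λ : |λ| = d+1; x^λ − b_λ x^{λ₀} : |λ| = d, λ ≠ λ₀)`, the element
`(z_1 x_1 + … + z_k x_k)^d` equals `(c_{λ₀}/a_{λ₀}) g(z_1,…,z_k) · x^{λ₀}`. -/
theorem power_of_linear_form_in_quotient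
    (K : Type*) [Field K] [CharZero K] (k d : ℕ) (hd : 1 ≤ d)
    (g : MvPolynomial (Fin k) K) (hg : g ≠ 0) (hhom : g.IsHomogeneous d)
    (lam0 : Fin k →₀ ℕ) (hl0 : coeff lam0 g ≠ 0)
    (b : (Fin k →₀ ℕ) → K)
    (hb : ∀ lam, b lam = (coeff lam g * (Nat.multinomial Finset.univ lam0 : K)) /
      ((Nat.multinomial Finset.univ lam : K) * coeff lam0 g))
    (I : Ideal (MvPolynomial (Fin k) K))
    (hI : I = Ideal.span
      ({q | ∃ lam : Fin k →₀ ℕ, (lam.sum fun _ m => m) = d + 1 ∧ q = monomial lam (1 : K)} ∪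
       {q | ∃ lam : Fin k →₀ ℕ, (lam.sum fun _ m => m) = d ∧ lam ≠ lam0 ∧
          q = monomial lam (1 : K) - C (b lam) * monomial lam0 (1 : K)}))
    (z : Fin k → K) :
    Ideal.Quotient.mk I ((∑ i, C (z i) * X i) ^ d) =
      Ideal.Quotient.mk I
        (C ((Nat.multinomial Finset.univ lam0 : K) / coeff lam0 g * eval z g) *
          monomial lam0 (1 : K)) := by
  classical
  have hc0 : (Nat.multinomial Finset.univ lam0 : K) ≠ 0 := by
    exact_mod_cast (Nat.multinomial_pos _ _).ne'
  -- every monomial of degree d is congruent to b lam * monomial lam0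
  have hkey : ∀ lam : Fin k →₀ ℕ, (lam.sum fun _ m => m) = d →
      Ideal.Quotient.mk I (monomial lam (1 : K)) =
        Ideal.Quotient.mk I (C (b lam) * monomial lam0 (1 : K)) := by
    intro lam hsum
    by_cases hne : lam = lam0
    · subst hne
      have hb1 : b lam = 1 := by
        rw [hb, mul_comm (coeff lam g)]
        exact div_self (mul_ne_zero hc0 hl0)
      rw [hb1, C_1, one_mul]
    · rw [Ideal.Quotient.eq, hI]
      exact Ideal.subset_span (Or.inr ⟨lam, hsum, hne, rfl⟩)
  have hmono : ∀ lam : Fin k →₀ ℕ,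
      (monomial lam (1 : K)) = ∏ i, (X i : MvPolynomial (Fin k) K) ^ lam i := by
    intro lam
    rw [monomial_eq, C_1, one_mul, Finsupp.prod_pow]
  rw [Finset.sum_pow_eq_sum_piAntidiag, map_sum]
  -- rewrite each term
  have hterm : ∀ f ∈ Finset.piAntidiag (Finset.univ : Finset (Fin k)) d,
      Ideal.Quotient.mk I ((Nat.multinomial Finset.univ f : MvPolynomial (Fin k) K) *
          ∏ i, (C (z i) * X i) ^ f i) =
        Ideal.Quotient.mk I
          (C ((Nat.multinomial Finset.univ lam0 : K) / coeff lam0 g *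
              (coeff (Finsupp.equivFunOnFinite.symm f) g * ∏ i, z i ^ f i)) *
            monomial lam0 (1 : K)) := by
    intro f hf
    obtain ⟨hfsum, -⟩ := Finset.mem_piAntidiag.1 hf
    set lam : Fin k →₀ ℕ := Finsupp.equivFunOnFinite.symm f with hlamdef
    have hlc : ⇑lam = f := Finsupp.equivFunOnFinite.apply_symm_apply f
    have hlsum : (lam.sum fun _ m => m) = d := by
      rw [Finsupp.sum_fintype _ _ (fun _ => rfl)]
      simpa [hlc] using hfsum
    have hprod : ∏ i, (C (z i) * X i) ^ f i
        = C (∏ i, z i ^ f i) * monomial lam (1 : K) := by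
      rw [hmono lam, map_prod, ← Finset.prod_mul_distrib]
      refine Finset.prod_congr rfl fun i _ => ?_
      rw [mul_pow, map_pow, hlc]
    have hn : (Nat.multinomial Finset.univ f : MvPolynomial (Fin k) K)
        = C (Nat.multinomial Finset.univ f : K) := (map_natCast C _).symm
    rw [hprod, hn, ← mul_assoc, ← map_mul, map_mul (Ideal.Quotient.mk I),
      hkey lam hlsum, ← map_mul (Ideal.Quotient.mk I), ← mul_assoc, ← map_mul]
    congr 2
    have hnf : (Nat.multinomial Finset.univ f : K) ≠ 0 := by
      exact_mod_cast (Nat.multinomial_pos _ _).ne'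
    rw [hb, hlc]
    field_simp
  rw [Finset.sum_congr rfl hterm, ← map_sum, ← Finset.sum_mul, ← map_sum, ← Finset.mul_sum]
  -- the scalar sum equals eval z g
  have hEval : ∑ f ∈ Finset.piAntidiag (Finset.univ : Finset (Fin k)) d,
      coeff (Finsupp.equivFunOnFinite.symm f) g * ∏ i, z i ^ f i = eval z g := by
    have h1 : ∑ f ∈ Finset.piAntidiag (Finset.univ : Finset (Fin k)) d,
        coeff (Finsupp.equivFunOnFinite.symm f) g * ∏ i, z i ^ f i
        = ∑ lam ∈ Finset.finsuppAntidiag (Finset.univ : Finset (Fin k)) d,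
            coeff lam g * ∏ i, z i ^ lam i := by
      refine Finset.sum_bij' (fun f _ => Finsupp.equivFunOnFinite.symm f)
        (fun lam _ => ⇑lam) ?_ ?_ ?_ ?_ ?_
      · intro f hf
        obtain ⟨hfsum, -⟩ := Finset.mem_piAntidiag.1 hf
        refine Finset.mem_finsuppAntidiag.2 ⟨?_, Finset.subset_univ _⟩
        simpa [Finsupp.equivFunOnFinite.apply_symm_apply f] using hfsum
      · intro lam hlam
        obtain ⟨hsum, -⟩ := Finset.mem_finsuppAntidiag.1 hlam
        exact Finset.mem_piAntidiag.2 ⟨hsum, fun i _ => Finset.mem_univ i⟩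
      · intro f hf
        exact Finsupp.equivFunOnFinite.apply_symm_apply f
      · intro lam hlam
        exact Finsupp.equivFunOnFinite_symm_coe lam
      · intro f hf
        simp [Finsupp.equivFunOnFinite.apply_symm_apply f]
    rw [h1, eval_eq']
    refine (Finset.sum_subset ?_ ?_).symm
    · intro lam hlam
      refine Finset.mem_finsuppAntidiag.2 ⟨?_, Finset.subset_univ _⟩
      have hdeg : (Finsupp.weight 1) lam = d := hhom (mem_support_iff.1 hlam)
      change (Finsupp.weight (fun _ => 1)) lam = d at hdeg
      rw [← Finsupp.degree_eq_weight_one] at hdeg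
      rw [← hdeg, Finsupp.degree]
      exact (Finset.sum_subset (Finset.subset_univ _)
        (fun i _ hi => Finsupp.notMem_support_iff.1 hi)).symm
    · intro lam _ hlam
      rw [mem_support_iff, not_not] at hlam
      rw [hlam, zero_mul]
  rw [hEval]
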